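/- Let F = 𝔽̄ₚ and let {x₁,...,xₙ, y₁,...,yₙ} be a collection of power series in F[[t]] which is maximal in its Q-isometry class (with respect to the partial order on associated line configurations). Then x₁,...,xₙ are 𝔽ₚ-hyper-independent, and likewise y₁,...,yₙ are 𝔽ₚ-hyper-independent. -/

import Mathlib

open PowerSeries

/-- The admissible line `y = min(v_t x, v_t y) · X + max(v_t x, v_t y)` attached to a pair
of power series, recorded as the pair (slope, intercept) in `ℕ∞ × ℕ∞`. -/
noncomputable def lineOf {F : Type*} [Semiring F] (x y : PowerSeries F) : ℕ∞ × ℕ∞ :=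
  (min x.order y.order, max x.order y.order)

/-- A line is degenerate if its slope or intercept is infinite. -/
def LineDegenerate (L : ℕ∞ × ℕ∞) : Prop := L.1 = ⊤ ∨ L.2 = ⊤

/-- The partial order "Π₁ lies above Π₂" on admissible lines. -/
def LiesAbove (L₁ L₂ : ℕ∞ × ℕ∞) : Prop :=
  (¬ LineDegenerate L₁ ∧ ¬ LineDegenerate L₂ ∧ L₂.1 ≤ L₁.1 ∧ L₂.1 + L₂.2 ≤ L₁.1 + L₁.2) ∨
  (LineDegenerate L₁ ∧ ¬ LineDegenerate L₂) ∨
  (L₁.1 = ⊤ ∧ L₂.1 = ⊤ ∧ L₂.2 ≤ L₁.2) ∨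
  (L₁.2 = ⊤ ∧ L₂.2 = ⊤ ∧ L₂.1 ≤ L₁.1)

/-- One line configuration lies above another. -/
def ConfigLiesAbove {n : ℕ} (C₁ C₂ : Fin n → ℕ∞ × ℕ∞) : Prop :=
  ∀ i, LiesAbove (C₁ i) (C₂ i)

/-- `(x', y')` belongs to the `Q`-isometry class of `(x, y)`: it is obtained from `(x, y)`
by the right action of a matrix in `SO(Q₀)(𝔽ₚ)`, where `Q₀` has Gram matrix
`[[0, Iₙ], [Iₙ, 0]]`. -/
def QIsometric (p : ℕ) {n : ℕ} {F : Type*} [Field F]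
    (x y x' y' : Fin n → PowerSeries F) : Prop :=
  ∃ R : Matrix (Fin n ⊕ Fin n) (Fin n ⊕ Fin n) (ZMod p),
    R.det = 1 ∧
    R.transpose * Matrix.fromBlocks 0 1 1 0 * R = Matrix.fromBlocks 0 1 1 0 ∧
    (∀ i, x' i = ∑ k, (ZMod.cast (R k (Sum.inl i)) : F) • Sum.elim x y k) ∧
    (∀ i, y' i = ∑ k, (ZMod.cast (R k (Sum.inr i)) : F) • Sum.elim x y k)

section Aux

variable {F : Type*} [Field F]

private lemma aux_le_order_sum {ι : Type*} (s : Finset ι) (f : ι → PowerSeries F) (m : ℕ∞)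
    (h : ∀ i ∈ s, m ≤ (f i).order) : m ≤ (∑ i ∈ s, f i).order := by
  apply PowerSeries.le_order
  intro k hk
  rw [map_sum]
  exact Finset.sum_eq_zero fun i hi =>
    PowerSeries.coeff_of_lt_order k (lt_of_lt_of_le hk (h i hi))

private lemma aux_le_order_smul (u : F) (f : PowerSeries F) : f.order ≤ (u • f).order := by
  apply PowerSeries.le_order
  intro k hk
  rw [map_smul, smul_eq_mul, PowerSeries.coeff_of_lt_order k hk, mul_zero]

private lemma aux_order_unit_smul {u : F} (hu : u ≠ 0) (f : PowerSeries F) :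
    (u • f).order = f.order := by
  refine le_antisymm ?_ (aux_le_order_smul u f)
  have h := aux_le_order_smul u⁻¹ (u • f)
  rwa [smul_smul, inv_mul_cancel₀ hu, one_smul] at h

private lemma aux_minmax_ne {α : Type*} [LinearOrder α] {a a' b : α} (h : a < a') :
    (min a' b, max a' b) ≠ (min a b, max a b) := by
  intro he
  have h1 : min a' b = min a b := congrArg Prod.fst he
  have h2 : max a' b = max a b := congrArg Prod.snd he
  rcases le_total b a with hb | hb
  · rw [max_eq_left (hb.trans h.le), max_eq_left hb] at h2
    exact h.ne' h2
  · rw [min_eq_left hb] at h1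
    rcases le_total a' b with h' | h'
    · rw [min_eq_left h'] at h1
      exact h.ne' h1
    · rw [min_eq_right h'] at h1
      subst h1
      rw [max_eq_left h.le, max_self] at h2
      exact h.ne' h2

private lemma aux_liesAbove_mono {a b a' b' : ℕ∞} (ha : a ≤ a') (hb : b ≤ b') :
    LiesAbove (min a' b', max a' b') (min a b, max a b) := by
  unfold LiesAbove LineDegenerate
  by_cases h2 : max a b = ⊤
  · have h1 : max a' b' = ⊤ := top_le_iff.mp (by rw [← h2]; exact max_le_max ha hb)
    exact Or.inr (Or.inr (Or.inr ⟨h1, h2, min_le_min ha hb⟩))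
  · have hnd : ¬ ((min a b, max a b).1 = ⊤ ∨ (min a b, max a b).2 = ⊤) := by
      rintro (h | h)
      · exact h2 (top_le_iff.mp (by rw [← h]; exact min_le_max))
      · exact h2 h
    by_cases hd : ((min a' b', max a' b').1 = ⊤ ∨ (min a' b', max a' b').2 = ⊤)
    · exact Or.inr (Or.inl ⟨hd, hnd⟩)
    · refine Or.inl ⟨hd, hnd, min_le_min ha hb, ?_⟩
      have e1 : min a b + max a b = a + b := by
        rw [min_add_max]
      have e2 : min a' b' + max a' b' = a' + b' := by
        rw [min_add_max]
      show min a b + max a b ≤ min a' b' + max a' b'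
      rw [e1, e2]
      exact add_le_add ha hb

private lemma aux_lineOf_comm {F : Type*} [Semiring F] (f g : PowerSeries F) :
    lineOf f g = lineOf g f := by
  unfold lineOf
  rw [min_comm, max_comm]

private lemma aux_qswap (p : ℕ) {n : ℕ}
    {x y x' y' : Fin n → PowerSeries F} (h : QIsometric p y x x' y') :
    QIsometric p x y y' x' := by
  obtain ⟨R', hdet, horth, hx', hy'⟩ := h
  set σ := Equiv.sumComm (Fin n) (Fin n) with hσ
  have hJ : (Matrix.fromBlocks 0 1 1 0 :
      Matrix (Fin n ⊕ Fin n) (Fin n ⊕ Fin n) (ZMod p)).submatrix σ σ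
      = Matrix.fromBlocks 0 1 1 0 := by
    ext i k
    rcases i with i | i <;> rcases k with k | k <;>
      simp [hσ, Matrix.submatrix_apply]
  refine ⟨R'.submatrix σ σ, ?_, ?_, ?_, ?_⟩
  · rw [Matrix.det_submatrix_equiv_self]; exact hdet
  · rw [Matrix.transpose_submatrix, ← hJ, Matrix.submatrix_mul_equiv,
      Matrix.submatrix_mul_equiv, horth]
  · intro i
    rw [hy' i, ← Equiv.sum_comp σ
      (fun m => (ZMod.cast (R' m (Sum.inr i)) : F) • Sum.elim y x m)]
    refine Finset.sum_congr rfl fun k _ => ?_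
    rcases k with k | k <;> simp [hσ, Matrix.submatrix_apply]
  · intro i
    rw [hx' i, ← Equiv.sum_comp σ
      (fun m => (ZMod.cast (R' m (Sum.inl i)) : F) • Sum.elim y x m)]
    refine Finset.sum_congr rfl fun k _ => ?_
    rcases k with k | k <;> simp [hσ, Matrix.submatrix_apply]

private lemma aux_main (p : ℕ) [Fact p.Prime] {F : Type*} [Field F] [CharP F p]
    {n : ℕ} (x y : Fin n → PowerSeries F)
    (hmax : ∀ x' y' : Fin n → PowerSeries F, QIsometric p x y x' y' →
      ConfigLiesAbove (fun i => lineOf (x' i) (y' i)) (fun i => lineOf (x i) (y i)) →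
      (fun i => lineOf (x' i) (y' i)) = fun i => lineOf (x i) (y i))
    (c : Fin n → ZMod p) :
    (∑ i, (ZMod.cast (c i) : F) • x i).order
      = Finset.univ.inf fun i => ((ZMod.cast (c i) : F) • x i).order := by
  classical
  have hinj : Function.Injective (ZMod.castHom (dvd_refl p) F) :=
    (ZMod.castHom (dvd_refl p) F).injective
  have hφ : ∀ r : ZMod p, (ZMod.cast r : F) = (ZMod.castHom (dvd_refl p) F) r :=
    fun r => (ZMod.castHom_apply r).symm
  have hcast_ne : ∀ r : ZMod p, r ≠ 0 → (ZMod.cast r : F) ≠ 0 := by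
    intro r hr h0
    exact hr (hinj (by rw [map_zero, ← hφ r, h0]))
  set d := Finset.univ.inf (fun i => ((ZMod.cast (c i) : F) • x i).order) with hdd
  have hge : d ≤ (∑ i, (ZMod.cast (c i) : F) • x i).order := by
    rw [hdd]
    exact aux_le_order_sum _ _ _ fun i _ => Finset.inf_le (Finset.mem_univ i)
  refine le_antisymm ?_ hge
  by_contra hlt'
  have hlt : d < (∑ i, (ZMod.cast (c i) : F) • x i).order := not_le.mp hlt'
  have hdtop : d ≠ ⊤ := (hlt.trans_le le_top).ne
  obtain ⟨d0, hd0⟩ : ∃ m : ℕ, (m : ℕ∞) = d := ⟨d.toNat, ENat.coe_toNat hdtop⟩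
  have hdle : ∀ i, d ≤ ((ZMod.cast (c i) : F) • x i).order := by
    intro i
    rw [hdd]
    exact Finset.inf_le (Finset.mem_univ i)
  set c' : Fin n → ZMod p :=
    fun i => if ((ZMod.cast (c i) : F) • x i).order = d then c i else 0 with hc'
  set z' := ∑ i, (ZMod.cast (c' i) : F) • x i with hz'def
  -- z' has order > d
  have hz'ord : d < z'.order := by
    rw [← hd0]
    have h1 : ((d0 : ℕ∞) + 1) ≤ z'.order := by
      apply PowerSeries.le_order
      intro k hk
      have hk2 : k ≤ d0 := by
        exact_mod_cast Nat.lt_succ_iff.mp (by exact_mod_cast hk)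
      rw [hz'def, map_sum]
      rcases lt_or_eq_of_le hk2 with hk3 | hk3
      · refine Finset.sum_eq_zero fun i _ => ?_
        by_cases hi : ((ZMod.cast (c i) : F) • x i).order = d
        · have e : c' i = c i := by simp only [hc']; rw [if_pos hi]
          rw [e]
          refine PowerSeries.coeff_of_lt_order k ?_
          rw [hi, ← hd0]
          exact_mod_cast hk3
        · have e : c' i = 0 := by simp only [hc']; rw [if_neg hi]
          rw [e, ZMod.cast_zero, zero_smul, map_zero]
      · subst hk3
        have hterm : ∀ i ∈ Finset.univ,
            (PowerSeries.coeff k) ((ZMod.cast (c' i) : F) • x i)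
              = (PowerSeries.coeff k) ((ZMod.cast (c i) : F) • x i) := by
          intro i _
          by_cases hi : ((ZMod.cast (c i) : F) • x i).order = d
          · have e : c' i = c i := by simp only [hc']; rw [if_pos hi]
            rw [e]
          · have e : c' i = 0 := by simp only [hc']; rw [if_neg hi]
            rw [e, ZMod.cast_zero, zero_smul, map_zero]
            have h2 : (k : ℕ∞) < ((ZMod.cast (c i) : F) • x i).order := by
              rw [hd0]
              exact lt_of_le_of_ne (hdle i) (Ne.symm hi)
            exact (PowerSeries.coeff_of_lt_order k h2).symm
        rw [Finset.sum_congr rfl hterm]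
        have h3 : (PowerSeries.coeff k) (∑ i, (ZMod.cast (c i) : F) • x i) = 0 :=
          PowerSeries.coeff_of_lt_order k (by rw [hd0]; exact hlt)
        rw [map_sum] at h3
        exact h3
    refine lt_of_lt_of_le ?_ h1
    exact_mod_cast Nat.lt_succ_self d0
  -- properties of c'
  have hc'prop : ∀ i, c' i ≠ 0 → (x i).order = d := by
    intro i hi
    by_cases h : ((ZMod.cast (c i) : F) • x i).order = d
    · have e : c' i = c i := by simp only [hc']; rw [if_pos h]
      have hci : c i ≠ 0 := by
        intro h0
        exact hi (by rw [e, h0])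
      have e2 := aux_order_unit_smul (hcast_ne _ hci) (x i)
      exact e2.symm.trans h
    · exact absurd (by simp only [hc']; rw [if_neg h]) hi
  -- there is an index with c' nonzero
  have hTne : ∃ i, c' i ≠ 0 := by
    have hn0 : (Finset.univ : Finset (Fin n)).Nonempty := by
      by_contra h
      rw [Finset.not_nonempty_iff_eq_empty] at h
      exact hdtop (by rw [hdd, h, Finset.inf_empty])
    obtain ⟨i0, -, hi0⟩ := Finset.exists_mem_eq_inf Finset.univ hn0
      (fun i => ((ZMod.cast (c i) : F) • x i).order)
    have hio : ((ZMod.cast (c i0) : F) • x i0).order = d := by rw [hdd, hi0]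
    refine ⟨i0, ?_⟩
    have e : c' i0 = c i0 := by simp only [hc']; rw [if_pos hio]
    rw [e]
    intro h0
    rw [h0, ZMod.cast_zero, zero_smul, PowerSeries.order_zero] at hio
    exact hdtop hio.symm
  obtain ⟨j, hjmem, hjmax⟩ := Finset.exists_max_image
    (Finset.univ.filter fun i => c' i ≠ 0) (fun i => (y i).order)
    (by obtain ⟨i, hi⟩ := hTne
        exact ⟨i, Finset.mem_filter.mpr ⟨Finset.mem_univ i, hi⟩⟩)
  have haj : c' j ≠ 0 := (Finset.mem_filter.mp hjmem).2
  have hxj : (x j).order = d := hc'prop j haj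
  have hymax : ∀ i, c' i ≠ 0 → (y i).order ≤ (y j).order := by
    intro i hi
    exact hjmax i (Finset.mem_filter.mpr ⟨Finset.mem_univ i, hi⟩)
  -- the matrices
  set B : Matrix (Fin n) (Fin n) (ZMod p) :=
    Matrix.of (fun k i => if i = j then c' k else if k = i then 1 else 0) with hB
  set Bi : Matrix (Fin n) (Fin n) (ZMod p) :=
    Matrix.of (fun i k => if k = j then (if i = j then (c' j)⁻¹ else -(c' j)⁻¹ * c' i)
      else if i = k then 1 else 0) with hBi
  have hBB : Bi * B = 1 := by
    ext i k
    rw [Matrix.mul_apply]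
    by_cases hk : k = j
    · rw [hk]
      by_cases hij : i = j
      · rw [hij]
        rw [Finset.sum_eq_single j]
        · simp [hB, hBi, Matrix.one_apply, inv_mul_cancel₀ haj]
        · intro m _ hm
          simp [hB, hBi, hm, Ne.symm hm]
        · exact fun h => absurd (Finset.mem_univ j) h
      · rw [Fintype.sum_eq_add j i (fun h => hij h.symm)]
        · simp only [hB, hBi, Matrix.of_apply, Matrix.one_apply]
          simp [hij]
          field_simp
          ring
        · intro m hm
          obtain ⟨hmj, hmi⟩ := hm
          simp [hB, hBi, hmj, Ne.symm hmi]
    · rw [Finset.sum_eq_single k]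
      · simp [hB, hBi, hk, Matrix.one_apply]
      · intro m _ hm
        simp [hB, hBi, hk, hm]
      · exact fun h => absurd (Finset.mem_univ k) h
  set D := Bi.transpose with hD
  set R : Matrix (Fin n ⊕ Fin n) (Fin n ⊕ Fin n) (ZMod p) :=
    Matrix.fromBlocks B 0 0 D with hR
  have hdet : R.det = 1 := by
    rw [hR, Matrix.det_fromBlocks_zero₂₁, hD, Matrix.det_transpose, mul_comm,
      ← Matrix.det_mul, hBB, Matrix.det_one]
  have horth : R.transpose * Matrix.fromBlocks 0 1 1 0 * R = Matrix.fromBlocks 0 1 1 0 := by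
    rw [hR, Matrix.fromBlocks_transpose, Matrix.fromBlocks_multiply, Matrix.fromBlocks_multiply]
    simp only [Matrix.transpose_zero, Matrix.mul_zero, Matrix.zero_mul, Matrix.mul_one,
      Matrix.one_mul, add_zero, zero_add, hD, Matrix.transpose_transpose,
      ← Matrix.transpose_mul, hBB, Matrix.transpose_one]
  -- the new collection
  set x' : Fin n → PowerSeries F := fun i => if i = j then z' else x i with hx'def
  set y' : Fin n → PowerSeries F := fun i => if i = j then (ZMod.cast ((c' j)⁻¹) : F) • y j
      else y i + (ZMod.cast (-(c' j)⁻¹ * c' i) : F) • y j with hy'def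
  have hQ : QIsometric p x y x' y' := by
    refine ⟨R, hdet, horth, ?_, ?_⟩
    · intro i
      rw [Fintype.sum_sum_type]
      simp only [hR, Matrix.fromBlocks_apply₁₁, Matrix.fromBlocks_apply₂₁, Matrix.zero_apply,
        ZMod.cast_zero, zero_smul, Finset.sum_const_zero, add_zero, Sum.elim_inl, Sum.elim_inr,
        hB, Matrix.of_apply]
      by_cases hi : i = j
      · rw [hi]
        simp [hx'def, hz'def]
      · simp only [hx'def, if_neg hi]
        rw [Finset.sum_eq_single i]
        · rw [if_pos rfl, ZMod.cast_one', one_smul]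
        · intro b _ hb
          rw [if_neg hb, ZMod.cast_zero, zero_smul]
        · exact fun h => absurd (Finset.mem_univ i) h
    · intro i
      rw [Fintype.sum_sum_type]
      simp only [hR, Matrix.fromBlocks_apply₁₂, Matrix.fromBlocks_apply₂₂, Matrix.zero_apply,
        ZMod.cast_zero, zero_smul, Finset.sum_const_zero, zero_add, Sum.elim_inl, Sum.elim_inr,
        hD, Matrix.transpose_apply, hBi, Matrix.of_apply]
      by_cases hi : i = j
      · rw [hi]
        rw [Finset.sum_eq_single j]
        · simp [hy'def]
        · intro b _ hb
          simp [hb, Ne.symm hb]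
        · exact fun h => absurd (Finset.mem_univ j) h
      · simp only [hy'def, if_neg hi]
        rw [Fintype.sum_eq_add j i (fun h => hi h.symm)]
        · simp [hi, ZMod.cast_one', add_comm]
        · intro m hm
          obtain ⟨hmj, hmi⟩ := hm
          simp [hmj, Ne.symm hmi]
  -- order comparisons
  have hx'ord : ∀ i, (x i).order ≤ (x' i).order := by
    intro i
    by_cases hi : i = j
    · rw [hi]
      simp only [hx'def, if_pos rfl]
      rw [hxj]
      exact hz'ord.le
    · simp only [hx'def, if_neg hi, le_refl]
  have hy'ord : ∀ i, (y i).order ≤ (y' i).order := by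
    intro i
    by_cases hi : i = j
    · rw [hi]
      simp only [hy'def, if_pos rfl]
      exact aux_le_order_smul _ _
    · by_cases hci : c' i = 0
      · simp only [hy'def, if_neg hi, hci, mul_zero, ZMod.cast_zero, zero_smul, add_zero,
          le_refl]
      · simp only [hy'def, if_neg hi]
        refine le_trans ?_ (PowerSeries.min_order_le_order_add _ _)
        refine le_inf le_rfl ?_
        exact le_trans (hymax i hci) (aux_le_order_smul _ _)
  have hcfg : ConfigLiesAbove (fun i => lineOf (x' i) (y' i)) (fun i => lineOf (x i) (y i)) := by
    intro i
    have h := aux_liesAbove_mono (hx'ord i) (hy'ord i)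
    simpa only [lineOf] using h
  have heq := hmax x' y' hQ hcfg
  have hj := congrFun heq j
  simp only [lineOf] at hj
  have hyj : (y' j).order = (y j).order := by
    simp only [hy'def, if_pos rfl]
    exact aux_order_unit_smul (hcast_ne _ (inv_ne_zero haj)) _
  rw [hyj, hxj] at hj
  have hx'j : d < (x' j).order := by
    simp only [hx'def, if_pos rfl]
    exact hz'ord
  exact aux_minmax_ne hx'j hj

end Aux

/-- If a collection `{x₁, ..., xₙ, y₁, ..., yₙ}` of power series is maximal in its
`Q`-isometry class (no member of the class has line configuration strictly above its own),
then `x₁, ..., xₙ` are `𝔽ₚ`-hyper-independent, and likewise `y₁, ..., yₙ`. -/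
theorem stmt_5 (p : ℕ) [Fact p.Prime] (F : Type*) [Field F] [IsAlgClosed F] [CharP F p]
    (n : ℕ) (x y : Fin n → PowerSeries F)
    (hmax : ∀ x' y' : Fin n → PowerSeries F, QIsometric p x y x' y' →
      ConfigLiesAbove (fun i => lineOf (x' i) (y' i)) (fun i => lineOf (x i) (y i)) →
      (fun i => lineOf (x' i) (y' i)) = fun i => lineOf (x i) (y i)) :
    (∀ c : Fin n → ZMod p,
        (∑ i, (ZMod.cast (c i) : F) • x i).order
          = Finset.univ.inf fun i => ((ZMod.cast (c i) : F) • x i).order) ∧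
    (∀ c : Fin n → ZMod p,
        (∑ i, (ZMod.cast (c i) : F) • y i).order
          = Finset.univ.inf fun i => ((ZMod.cast (c i) : F) • y i).order) := by
  constructor
  · exact fun c => aux_main p x y hmax c
  · refine fun c => aux_main p y x ?_ c
    intro x' y' hq hcfg
    have hq' : QIsometric p x y y' x' := aux_qswap p hq
    have hcfg' : ConfigLiesAbove (fun i => lineOf (y' i) (x' i))
        (fun i => lineOf (x i) (y i)) := by
      intro i
      have h0 : LiesAbove (lineOf (x' i) (y' i)) (lineOf (y i) (x i)) := hcfg i
      show LiesAbove (lineOf (y' i) (x' i)) (lineOf (x i) (y i))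
      rw [aux_lineOf_comm (y' i) (x' i), aux_lineOf_comm (x i) (y i)]
      exact h0
    have h := hmax y' x' hq' hcfg'
    funext i
    have hi : lineOf (y' i) (x' i) = lineOf (x i) (y i) := congrFun h i
    show lineOf (x' i) (y' i) = lineOf (y i) (x i)
    rw [aux_lineOf_comm (x' i) (y' i), hi, aux_lineOf_comm (x i) (y i)]
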